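/- Let (σ, α) be a bipartite combinatorial map on a nonempty finite set H rooted at r. Then: (a) the adjacency graph on the vertices of (σ,α) is connected; (b) for every h ∈ H, the distances d(vertex(h)) and d(vertex(α(h))) from the root-vertex differ by exactly one; (c) the geodesic orientation, defined by I = {h ∈ H : d(vertex(h)) = d(vertex(α(h))) + 1} and O = H∖I, is an orientation (α(I) = O) and is left-connected: for every h ∈ H there exists q > 0 with β^q(h) = r, where β is its backward function. -/

import Mathlib

/-- `(σ,α)` is a combinatorial map. -/
def IsCombMap {X : Type*} (σ α : Equiv.Perm X) : Prop :=
  (∀ h, α h ≠ h) ∧ (∀ h, α (α h) = h) ∧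
    ∀ x y : X, ∃ g ∈ Subgroup.closure ({σ, α} : Set (Equiv.Perm X)), g x = y

/-- The backward function of an orientation with ingoing set `I`. -/
noncomputable def backward {X : Type*} (σ α : Equiv.Perm X) (I : Set X) (h : X) : X := by
  classical
  exact if h ∈ I then σ (α h) else σ h

/-- Half-edges belong to the same vertex iff they are in the same `σ`-orbit. -/
def vertexSetoid {H : Type*} (σ : Equiv.Perm H) : Setoid H :=
  ⟨σ.SameCycle,
    ⟨fun x => Equiv.Perm.SameCycle.refl σ x, fun h => h.symm, fun h₁ h₂ => h₁.trans h₂⟩⟩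

/-- The adjacency graph on the vertices (i.e. `σ`-orbits) of the map `(σ,α)`:
two distinct vertices are adjacent if some edge `{h, α h}` joins them. -/
def vertexGraph {H : Type*} (σ α : Equiv.Perm H) :
    SimpleGraph (Quotient (vertexSetoid σ)) where
  Adj u v := u ≠ v ∧ ∃ h : H,
    (Quotient.mk (vertexSetoid σ) h = u ∧ Quotient.mk (vertexSetoid σ) (α h) = v) ∨
    (Quotient.mk (vertexSetoid σ) h = v ∧ Quotient.mk (vertexSetoid σ) (α h) = u)
  symm := by
    constructor
    rintro u v ⟨hne, h, hh⟩
    exact ⟨hne.symm, h, hh.symm⟩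
  loopless := by
    constructor
    rintro u ⟨hne, -⟩
    exact hne rfl

section GeoAux

open SimpleGraph

variable {H : Type*} [Fintype H] [Nonempty H]

private lemma vg_adj {σ α : Equiv.Perm H} {u v : Quotient (vertexSetoid σ)} :
    (vertexGraph σ α).Adj u v ↔ (u ≠ v ∧ ∃ h : H,
      (Quotient.mk (vertexSetoid σ) h = u ∧ Quotient.mk (vertexSetoid σ) (α h) = v) ∨
      (Quotient.mk (vertexSetoid σ) h = v ∧ Quotient.mk (vertexSetoid σ) (α h) = u)) :=
  Iff.rfl

private lemma qv_sigma (σ : Equiv.Perm H) (h : H) :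
    Quotient.mk (vertexSetoid σ) (σ h) = Quotient.mk (vertexSetoid σ) h :=
  Quotient.sound ⟨-1, by simp⟩

private lemma reach_alpha (σ α : Equiv.Perm H) (h : H) :
    (vertexGraph σ α).Reachable (Quotient.mk (vertexSetoid σ) h)
      (Quotient.mk (vertexSetoid σ) (α h)) := by
  by_cases he : Quotient.mk (vertexSetoid σ) h = Quotient.mk (vertexSetoid σ) (α h)
  · exact he ▸ Reachable.refl _
  · exact SimpleGraph.Adj.reachable ⟨he, h, Or.inl ⟨rfl, rfl⟩⟩

private lemma vg_connected (σ α : Equiv.Perm H) (hmap : IsCombMap σ α) :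
    (vertexGraph σ α).Connected := by
  obtain ⟨-, -, htrans⟩ := hmap
  rw [SimpleGraph.connected_iff]
  refine ⟨fun u v => ?_, ⟨Quotient.mk _ (Classical.arbitrary H)⟩⟩
  induction u using Quotient.ind with | _ x => ?_
  induction v using Quotient.ind with | _ y => ?_
  obtain ⟨g, hg, hgx⟩ := htrans x y
  have key : ∀ g : Equiv.Perm H, g ∈ Subgroup.closure ({σ, α} : Set (Equiv.Perm H)) →
      ∀ x : H, (vertexGraph σ α).Reachable (Quotient.mk (vertexSetoid σ) x)
        (Quotient.mk (vertexSetoid σ) (g x)) := by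
    intro g hg
    induction hg using Subgroup.closure_induction with
    | mem z hz =>
      intro x
      rcases hz with rfl | rfl
      · rw [qv_sigma]
      · exact reach_alpha _ _ x
    | one =>
      intro x
      simp only [Equiv.Perm.coe_one, id_eq]
      exact SimpleGraph.Reachable.refl _
    | mul a b ha hb pa pb =>
      intro x
      rw [Equiv.Perm.mul_apply]
      exact (pb x).trans (pa (b x))
    | inv a ha pa =>
      intro x
      have h2 := pa (a⁻¹ x)
      rw [show a (a⁻¹ x) = x by simp] at h2
      exact h2.symm
  exact hgx ▸ key g hg x

private lemma adj_color {σ α : Equiv.Perm H} (c : Quotient (vertexSetoid σ) → Bool)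
    (hc : ∀ h : H, c (Quotient.mk (vertexSetoid σ) h) ≠ c (Quotient.mk (vertexSetoid σ) (α h)))
    {u v : Quotient (vertexSetoid σ)} (hadj : (vertexGraph σ α).Adj u v) : c u ≠ c v := by
  obtain ⟨-, g, hg⟩ := vg_adj.mp hadj
  rcases hg with ⟨h1, h2⟩ | ⟨h1, h2⟩
  · subst h1; subst h2; exact hc g
  · subst h1; subst h2; exact (hc g).symm

private lemma walk_parity {σ α : Equiv.Perm H} (c : Quotient (vertexSetoid σ) → Bool)
    (hc : ∀ h : H, c (Quotient.mk (vertexSetoid σ) h) ≠ c (Quotient.mk (vertexSetoid σ) (α h)))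
    {u v : Quotient (vertexSetoid σ)} (p : (vertexGraph σ α).Walk u v) :
    (c u = c v) ↔ Even p.length := by
  induction p with
  | nil => simp
  | @cons a b w hadj p ih =>
    have hne : c a ≠ c b := adj_color c hc hadj
    rw [SimpleGraph.Walk.length_cons, Nat.even_add_one, ← ih]
    cases hca : c a <;> cases hcb : c b <;> cases hcw : c w <;> simp_all

end GeoAux

/-- for a bipartite combinatorial map rooted at `r`: (a) the
adjacency graph on vertices is connected; (b) the distances to the root-vertex of the
two endpoints of any edge differ by exactly one; (c) the geodesic orientation (whose
ingoing half-edges are those pointing away from the root-vertex in distance) is an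
orientation and is left-connected. -/
theorem geodesic_orientation_left_connected {H : Type*} [Fintype H] [Nonempty H]
    (σ α : Equiv.Perm H) (hmap : IsCombMap σ α) (r : H)
    (hbip : ∃ c : Quotient (vertexSetoid σ) → Bool,
      ∀ h : H, c (Quotient.mk (vertexSetoid σ) h) ≠ c (Quotient.mk (vertexSetoid σ) (α h))) :
    (vertexGraph σ α).Connected ∧
    (∀ h : H,
      (vertexGraph σ α).dist (Quotient.mk (vertexSetoid σ) h) (Quotient.mk (vertexSetoid σ) r) =
        (vertexGraph σ α).dist (Quotient.mk (vertexSetoid σ) (α h))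
          (Quotient.mk (vertexSetoid σ) r) + 1 ∨
      (vertexGraph σ α).dist (Quotient.mk (vertexSetoid σ) (α h)) (Quotient.mk (vertexSetoid σ) r) =
        (vertexGraph σ α).dist (Quotient.mk (vertexSetoid σ) h)
          (Quotient.mk (vertexSetoid σ) r) + 1) ∧
    (α '' {h : H |
        (vertexGraph σ α).dist (Quotient.mk (vertexSetoid σ) h) (Quotient.mk (vertexSetoid σ) r) =
          (vertexGraph σ α).dist (Quotient.mk (vertexSetoid σ) (α h))
            (Quotient.mk (vertexSetoid σ) r) + 1} =
      {h : H |
        (vertexGraph σ α).dist (Quotient.mk (vertexSetoid σ) h) (Quotient.mk (vertexSetoid σ) r) =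
          (vertexGraph σ α).dist (Quotient.mk (vertexSetoid σ) (α h))
            (Quotient.mk (vertexSetoid σ) r) + 1}ᶜ) ∧
    (∀ h : H, ∃ q : ℕ, 0 < q ∧
      (backward σ α {h : H |
        (vertexGraph σ α).dist (Quotient.mk (vertexSetoid σ) h) (Quotient.mk (vertexSetoid σ) r) =
          (vertexGraph σ α).dist (Quotient.mk (vertexSetoid σ) (α h))
            (Quotient.mk (vertexSetoid σ) r) + 1})^[q] h = r) := by
  classical
  open SimpleGraph in
  obtain ⟨c, hc⟩ := hbip
  have hconn : (vertexGraph σ α).Connected := vg_connected σ α hmap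
  obtain ⟨hfp, hinv, htrans⟩ := hmap
  set G := vertexGraph σ α with hG
  set root := Quotient.mk (vertexSetoid σ) r with hroot
  -- parity of distances
  have hparity : ∀ u : Quotient (vertexSetoid σ),
      (Even (G.dist u root) ↔ (c u = c root)) := by
    intro u
    obtain ⟨p, hp⟩ := (hconn u root).exists_walk_length_eq_dist
    rw [← hp]
    exact (walk_parity c hc p).symm
  have hadj_ne : ∀ u v : Quotient (vertexSetoid σ), G.Adj u v →
      G.dist u root ≠ G.dist v root := by
    intro u v hadj he
    have h1 := hparity u
    have h2 := hparity v
    rw [he] at h1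
    have : c u = c v := by
      cases hcu : c u <;> cases hcv : c v <;> cases hcr : c root <;> simp_all
    exact adj_color c hc hadj this
  have hadj_le : ∀ u v : Quotient (vertexSetoid σ), G.Adj u v →
      G.dist u root ≤ G.dist v root + 1 := by
    intro u v hadj
    obtain ⟨p, hp⟩ := (hconn v root).exists_walk_length_eq_dist
    have := SimpleGraph.dist_le (SimpleGraph.Walk.cons hadj p)
    rwa [SimpleGraph.Walk.length_cons, hp] at this
  have hadjh : ∀ h : H, G.Adj (Quotient.mk (vertexSetoid σ) h)
      (Quotient.mk (vertexSetoid σ) (α h)) := by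
    intro h
    exact ⟨fun e => hc h (congrArg c e), h, Or.inl ⟨rfl, rfl⟩⟩
  -- part (b)
  have key_b : ∀ h : H,
      G.dist (Quotient.mk (vertexSetoid σ) h) root =
        G.dist (Quotient.mk (vertexSetoid σ) (α h)) root + 1 ∨
      G.dist (Quotient.mk (vertexSetoid σ) (α h)) root =
        G.dist (Quotient.mk (vertexSetoid σ) h) root + 1 := by
    intro h
    have h1 := hadj_ne _ _ (hadjh h)
    have h2 := hadj_le _ _ (hadjh h)
    have h3 := hadj_le _ _ (hadjh h).symm
    omega
  refine ⟨hconn, key_b, ?_, ?_⟩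
  -- part (c) orientation
  · ext x
    simp only [Set.mem_image, Set.mem_compl_iff, Set.mem_setOf_eq]
    constructor
    · rintro ⟨y, hy, rfl⟩
      rw [hinv y]
      omega
    · intro hx
      refine ⟨α x, ?_, hinv x⟩
      rw [hinv x]
      rcases key_b x with h1 | h1
      · exact absurd h1 hx
      · exact h1
  -- part (c) left-connectedness
  · set I : Set H := {h : H |
      G.dist (Quotient.mk (vertexSetoid σ) h) root =
        G.dist (Quotient.mk (vertexSetoid σ) (α h)) root + 1} with hIdef
    have hmemI : ∀ h : H, h ∈ I ↔
        G.dist (Quotient.mk (vertexSetoid σ) h) root =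
          G.dist (Quotient.mk (vertexSetoid σ) (α h)) root + 1 := fun h => Iff.rfl
    have hβO : ∀ h : H, h ∉ I → backward σ α I h = σ h := by
      intro h hh; simp [backward, hh]
    have hβI : ∀ h : H, h ∈ I → backward σ α I h = σ (α h) := by
      intro h hh; simp [backward, hh]
    have hD0_notI : ∀ h : H, G.dist (Quotient.mk (vertexSetoid σ) h) root = 0 → h ∉ I := by
      intro h h0 hh
      rw [hmemI] at hh
      omega
    have lemA : ∀ h : H, G.dist (Quotient.mk (vertexSetoid σ) h) root = 0 →
        ∃ q : ℕ, 0 < q ∧ (backward σ α I)^[q] h = r := by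
      intro h h0
      have hsc : σ.SameCycle h r := Quotient.exact (hconn.dist_eq_zero_iff.mp h0)
      obtain ⟨i, hip, -, hir⟩ := hsc.exists_pow_eq''
      have hiter : ∀ k : ℕ, (backward σ α I)^[k] h = (σ ^ k) h ∧
          G.dist (Quotient.mk (vertexSetoid σ) ((σ ^ k) h)) root = 0 := by
        intro k
        induction k with
        | zero => simpa using h0
        | succ k ih =>
          obtain ⟨ih1, ih2⟩ := ih
          have hpow : (σ ^ (k + 1)) h = σ ((σ ^ k) h) := by
            rw [pow_succ']; rfl
          refine ⟨?_, ?_⟩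
          · rw [Function.iterate_succ_apply', ih1, hβO _ (hD0_notI _ ih2), hpow]
          · rw [hpow, qv_sigma]
            exact ih2
      exact ⟨i, hip, by rw [(hiter i).1, hir]⟩
    have lemSub : ∀ i : ℕ, ∀ h : H, (σ ^ i) h ∈ I → ∃ m : ℕ,
        (backward σ α I)^[m] h ∈ I ∧
        Quotient.mk (vertexSetoid σ) ((backward σ α I)^[m] h) =
          Quotient.mk (vertexSetoid σ) h := by
      intro i
      induction i with
      | zero => intro h hh; exact ⟨0, by simpa using hh, rfl⟩
      | succ i ih =>
        intro h hh
        by_cases hI : h ∈ I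
        · exact ⟨0, hI, rfl⟩
        · have h1 : (σ ^ i) (σ h) ∈ I := by
            have he : (σ ^ (i + 1)) h = (σ ^ i) (σ h) := by rw [pow_succ]; rfl
            rwa [he] at hh
          obtain ⟨m, hm1, hm2⟩ := ih (σ h) h1
          refine ⟨m + 1, ?_, ?_⟩
          · rw [Function.iterate_succ_apply, hβO _ hI]; exact hm1
          · rw [Function.iterate_succ_apply, hβO _ hI, hm2, qv_sigma]
    have main : ∀ n : ℕ, ∀ h : H, G.dist (Quotient.mk (vertexSetoid σ) h) root = n →
        ∃ q : ℕ, 0 < q ∧ (backward σ α I)^[q] h = r := by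
      intro n
      induction n with
      | zero => exact lemA
      | succ n ih =>
        intro h hn
        -- find a half-edge of vertex h that is in I
        obtain ⟨p, hp⟩ := (hconn (Quotient.mk (vertexSetoid σ) h) root).exists_walk_length_eq_dist
        have hnotnil : ¬ p.Nil := by
          intro hnil
          rw [SimpleGraph.Walk.nil_iff_length_eq.mp hnil] at hp
          omega
        have hadj : G.Adj (Quotient.mk (vertexSetoid σ) h) (p.getVert 1) :=
          p.adj_snd hnotnil
        have hdu : G.dist (p.getVert 1) root = n := by
          have h1 : G.dist (p.getVert 1) root ≤ p.tail.length := SimpleGraph.dist_le p.tail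
          have h2 := SimpleGraph.Walk.length_tail_add_one hnotnil
          have h3 := hadj_le _ _ hadj
          omega
        obtain ⟨-, g, hg⟩ := vg_adj.mp hadj
        have hexI : ∃ h₀ : H, Quotient.mk (vertexSetoid σ) h₀ = Quotient.mk (vertexSetoid σ) h ∧
            h₀ ∈ I := by
          rcases hg with ⟨h1, h2⟩ | ⟨h1, h2⟩
          · refine ⟨g, h1, ?_⟩
            rw [hmemI, h1, h2, hn, hdu]
          · refine ⟨α g, h2, ?_⟩
            rw [hmemI, hinv g, h2, h1, hn, hdu]
        obtain ⟨h₀, hq0, hI0⟩ := hexI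
        have hsc : σ.SameCycle h h₀ := Quotient.exact hq0.symm
        obtain ⟨i, -, -, hir⟩ := hsc.exists_pow_eq''
        obtain ⟨m, hm1, hm2⟩ := lemSub i h (by rw [hir]; exact hI0)
        set h₁ := (backward σ α I)^[m] h with hh1
        have hd1 : G.dist (Quotient.mk (vertexSetoid σ) h₁) root = n + 1 := by
          rw [hm2, hn]
        have hdα : G.dist (Quotient.mk (vertexSetoid σ) (α h₁)) root = n := by
          rw [hmemI] at hm1
          omega
        have hstep : backward σ α I h₁ = σ (α h₁) := hβI _ hm1
        have hdβ : G.dist (Quotient.mk (vertexSetoid σ) (backward σ α I h₁)) root = n := by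
          rw [hstep, qv_sigma]
          exact hdα
        obtain ⟨q', hq'pos, hq'⟩ := ih _ hdβ
        refine ⟨q' + (m + 1), by omega, ?_⟩
        rw [Function.iterate_add_apply, Function.iterate_succ_apply', ← hh1, hq']
    intro h
    exact main _ h rfl
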